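/- Fix β ∈ (0,1) and τ_Q > 0, and take σ_Z = 0, so that for α ∈ (0,1), σ_α = √(α² + (1−α)²) and c(α) = αβ + (1−α)(1−β). Then both the mean admitted quality q(α) = (c(α)/σ_α)·H(τ_Q σ_α / c(α)) and the admitted fraction n(α) = 1 − Φ(τ_Q σ_α / c(α)) are strictly increasing for α ∈ (0,β) and strictly decreasing for α ∈ (β,1); in particular both attain their maximum over (0,1) at α = β. -/

import Mathlib

set_option maxHeartbeats 1000000

open MeasureTheory Real Set Filter Topology

/-- Standard normal pdf. -/
noncomputable def phi (x : ℝ) : ℝ := Real.exp (-x ^ 2 / 2) / Real.sqrt (2 * Real.pi)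

/-- Standard normal cdf. -/
noncomputable def Phi (x : ℝ) : ℝ := ∫ y in Set.Iic x, phi y

/-- Standard normal hazard rate. -/
noncomputable def Haz (x : ℝ) : ℝ := phi x / (1 - Phi x)

lemma sqrt2pi_pos : 0 < Real.sqrt (2 * Real.pi) := Real.sqrt_pos.2 (by positivity)

lemma phi_pos (x : ℝ) : 0 < phi x := div_pos (Real.exp_pos _) sqrt2pi_pos

lemma continuous_phi : Continuous phi := by
  unfold phi
  fun_prop

lemma integrable_phi : Integrable phi := by
  have h : Integrable (fun x : ℝ => Real.exp (-(1/2 : ℝ) * x ^ 2)) :=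
    integrable_exp_neg_mul_sq (by norm_num)
  have h2 := h.div_const (Real.sqrt (2 * Real.pi))
  refine h2.congr (Filter.Eventually.of_forall fun x => ?_)
  unfold phi; ring_nf

lemma integral_phi : ∫ x, phi x = 1 := by
  have h := integral_gaussian (1/2 : ℝ)
  have h2 : ∫ x : ℝ, Real.exp (-x ^ 2 / 2) = Real.sqrt (2 * Real.pi) := by
    rw [show Real.sqrt (2 * Real.pi) = Real.sqrt (Real.pi / (1/2)) by rw [show Real.pi / (1/2) = 2 * Real.pi by ring], ← h]
    congr 1; ext x; ring_nf
  unfold phi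
  rw [integral_div, h2, div_self (ne_of_gt sqrt2pi_pos)]

lemma Phi_sub (a b : ℝ) : Phi b - Phi a = ∫ x in a..b, phi x :=
  intervalIntegral.integral_Iic_sub_Iic integrable_phi.integrableOn integrable_phi.integrableOn

lemma strictMono_Phi : StrictMono Phi := by
  intro a b hab
  have h := intervalIntegral.intervalIntegral_pos_of_pos (f := phi) integrable_phi.intervalIntegrable
    (fun x => phi_pos x) hab
  have h2 := Phi_sub a b
  linarith

lemma tendsto_Phi : Tendsto Phi atTop (𝓝 1) := by
  have h := tendsto_setIntegral_of_monotone (μ := volume) (f := phi)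
    (s := fun r : ℝ => Iic r) (fun r => measurableSet_Iic)
    (fun r r' h => Iic_subset_Iic.2 h)
    (by rw [iUnion_Iic]; exact integrable_phi.integrableOn)
  rw [iUnion_Iic, Measure.restrict_univ, integral_phi] at h
  exact h

lemma Phi_lt_one (x : ℝ) : Phi x < 1 :=
  lt_of_lt_of_le (strictMono_Phi (lt_add_one x))
    (strictMono_Phi.monotone.ge_of_tendsto tendsto_Phi (x + 1))

lemma one_sub_Phi_pos (x : ℝ) : 0 < 1 - Phi x := by linarith [Phi_lt_one x]

lemma Haz_pos (x : ℝ) : 0 < Haz x := div_pos (phi_pos x) (one_sub_Phi_pos x)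

lemma hasDerivAt_Phi (x : ℝ) : HasDerivAt Phi (phi x) x := by
  have key : ∀ u : ℝ, Phi u = Phi 0 + ∫ t in (0:ℝ)..u, phi t := by
    intro u
    have := Phi_sub 0 u
    linarith
  have h : HasDerivAt (fun u => Phi 0 + ∫ t in (0:ℝ)..u, phi t) (phi x) x := by
    have := intervalIntegral.integral_hasDerivAt_right (a := (0:ℝ)) (b := x)
      integrable_phi.intervalIntegrable
      (continuous_phi.stronglyMeasurable.stronglyMeasurableAtFilter)
      continuous_phi.continuousAt
    exact this.const_add _
  exact h.congr_of_eventuallyEq (Filter.Eventually.of_forall key)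

lemma hasDerivAt_phi (x : ℝ) : HasDerivAt phi (-x * phi x) x := by
  have h1 : HasDerivAt (fun y : ℝ => -y ^ 2 / 2) (-x) x := by
    have h : HasDerivAt (fun y : ℝ => y ^ 2) (2 * x) x := by simpa using hasDerivAt_pow 2 x
    have h2 := (h.div_const 2).neg
    refine (h2.congr_deriv ?_).congr_of_eventuallyEq (Filter.Eventually.of_forall fun y => ?_)
    · ring
    · show -y ^ 2 / 2 = -(y ^ 2 / 2); ring
  have h2 := (h1.exp).div_const (Real.sqrt (2 * Real.pi))
  refine h2.congr_deriv ?_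
  unfold phi; ring

lemma hasDerivAt_Haz (x : ℝ) : HasDerivAt Haz (Haz x * (Haz x - x)) x := by
  have h := (hasDerivAt_phi x).div ((hasDerivAt_const x (1:ℝ)).sub (hasDerivAt_Phi x))
    (ne_of_gt (one_sub_Phi_pos x))
  refine h.congr_deriv ?_
  simp only [Pi.sub_apply]
  have hne := ne_of_gt (one_sub_Phi_pos x)
  unfold Haz
  field_simp
  ring

/-- Mills-type inequality. -/
lemma mills (x : ℝ) : x * phi x / (x ^ 2 + 1) < 1 - Phi x := by
  set M : ℝ → ℝ := fun x => x * phi x / (x ^ 2 + 1) - (1 - Phi x) with hM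
  have hD : ∀ y : ℝ, HasDerivAt M (2 * phi y / (y ^ 2 + 1) ^ 2) y := by
    intro y
    have hnum : HasDerivAt (fun y : ℝ => y * phi y) ((1 - y ^ 2) * phi y) y := by
      have h := (hasDerivAt_id y).mul (hasDerivAt_phi y)
      refine h.congr_deriv ?_
      simp only [id_eq]
      ring
    have hden : HasDerivAt (fun y : ℝ => y ^ 2 + 1) (2 * y) y := by
      simpa using (hasDerivAt_pow 2 y).add_const 1
    have hdenne : (y : ℝ) ^ 2 + 1 ≠ 0 := by positivity
    have h1 := hnum.div hden hdenne
    have h2 := ((hasDerivAt_const y (1:ℝ)).sub (hasDerivAt_Phi y))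
    have h3 := h1.sub h2
    refine h3.congr_deriv ?_
    have : ((y:ℝ) ^ 2 + 1) ^ 2 ≠ 0 := by positivity
    field_simp
    ring
  have hmono : StrictMono M :=
    strictMono_of_deriv_pos fun y => by
      rw [(hD y).deriv]
      have := phi_pos y
      positivity
  have hlim : Tendsto M atTop (𝓝 0) := by
    have h1 : Tendsto (fun y : ℝ => 1 - Phi y) atTop (𝓝 0) := by
      have h := tendsto_Phi.const_sub 1
      simpa using h
    have hphi0 : Tendsto phi atTop (𝓝 0) := by
      have hsq : Tendsto (fun y : ℝ => -y ^ 2 / 2) atTop atBot := by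
        have ha : Tendsto (fun y : ℝ => y ^ 2) atTop atTop := tendsto_pow_atTop two_ne_zero
        have hb := tendsto_neg_atTop_atBot.comp (ha.atTop_div_const (by norm_num : (0:ℝ) < 2))
        refine hb.congr fun y => ?_
        simp [Function.comp, neg_div]
      have h := (Real.tendsto_exp_atBot.comp hsq).div_const (Real.sqrt (2 * Real.pi))
      rw [zero_div] at h
      exact h.congr fun y => by simp [phi, Function.comp]
    have h2 : Tendsto (fun y : ℝ => y * phi y / (y ^ 2 + 1)) atTop (𝓝 0) := by
      apply tendsto_of_tendsto_of_tendsto_of_le_of_le' tendsto_const_nhds hphi0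
      · filter_upwards [eventually_ge_atTop (0:ℝ)] with y hy
        have := (phi_pos y).le
        positivity
      · filter_upwards [eventually_ge_atTop (1:ℝ)] with y hy
        rw [div_le_iff₀ (by positivity)]
        nlinarith [mul_pos (phi_pos y) (show (0:ℝ) < y ^ 2 + 1 - y by nlinarith)]
    have h3 := h2.sub h1
    simpa using h3
  have hle := hmono.monotone.ge_of_tendsto hlim (x + 1)
  have hlt := hmono (lt_add_one x)
  have hMx : M x < 0 := by linarith
  have : x * phi x / (x ^ 2 + 1) - (1 - Phi x) < 0 := hMx
  linarith

lemma haz_lt (x : ℝ) (hx : 0 < x) : x * Haz x < x ^ 2 + 1 := by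
  have h := mills x
  have h1 := one_sub_Phi_pos x
  have h2 : x * phi x < (1 - Phi x) * (x ^ 2 + 1) := by
    rw [div_lt_iff₀ (by positivity)] at h
    linarith
  unfold Haz
  rw [← mul_div_assoc, div_lt_iff₀ h1]
  nlinarith

lemma strictAntiOn_haz_div : StrictAntiOn (fun x => Haz x / x) (Set.Ioi 0) := by
  apply strictAntiOn_of_deriv_neg (convex_Ioi 0)
  · exact ContinuousOn.div
      (fun x _ => ((hasDerivAt_Haz x).continuousAt).continuousWithinAt)
      continuousOn_id (fun x hx => ne_of_gt hx)
  · intro x hx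
    rw [interior_Ioi] at hx
    have hx0 : (0:ℝ) < x := hx
    have hder : HasDerivAt (fun x => Haz x / x)
        ((Haz x * (Haz x - x) * x - Haz x * 1) / x ^ 2) x :=
      (hasDerivAt_Haz x).div (hasDerivAt_id x) (ne_of_gt hx0)
    rw [hder.deriv]
    have hH := Haz_pos x
    have hlt := haz_lt x hx0
    have hnum : Haz x * (Haz x - x) * x - Haz x * 1 < 0 := by nlinarith
    exact div_neg_of_neg_of_pos hnum (by positivity)

lemma poly1 (b a a' : ℝ) (h0 : 0 < a) (h1 : a < a') (h2 : a' ≤ b) (h3 : b < 1) :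
    (2*a'^2-2*a'+1)*(a*b+(1-a)*(1-b))^2 < (2*a^2-2*a+1)*(a'*b+(1-a')*(1-b))^2 := by
  have ha1 : a < 1 := by linarith
  have hap : 0 < a' := by linarith
  have key : 0 < 2*(a+a'-1)*b^2 + 2*(1-2*a*a')*b - (a+a'-2*a*a') := by
    nlinarith [mul_pos h0 hap, mul_nonneg (sub_nonneg.2 h2) (sub_pos.2 h3).le,
      mul_pos (sub_pos.2 h3) h0, mul_nonneg (sub_nonneg.2 h2) h0.le, mul_pos (sub_pos.2 h1) h0,
      mul_pos (sub_pos.2 h1) hap, mul_pos (sub_pos.2 ha1) h0, sq_nonneg (b-a'), sq_nonneg (b-a)]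
  nlinarith [mul_pos (sub_pos.2 h1) key]

lemma poly2 (b a a' : ℝ) (h0 : 0 < b) (h1 : b ≤ a) (h2 : a < a') (h3 : a' < 1) :
    (2*a^2-2*a+1)*(a'*b+(1-a')*(1-b))^2 < (2*a'^2-2*a'+1)*(a*b+(1-a)*(1-b))^2 := by
  have ha : 0 < a := by linarith
  have ha1 : a < 1 := by linarith
  have key : 2*(a+a'-1)*b^2 + 2*(1-2*a*a')*b - (a+a'-2*a*a') < 0 := by
    nlinarith [mul_pos h0 ha, mul_nonneg (sub_nonneg.2 h1) h0.le, mul_pos (sub_pos.2 h3) h0,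
      mul_pos (sub_pos.2 h3) ha, mul_pos (sub_pos.2 h2) h0, mul_pos (sub_pos.2 ha1) h0,
      sq_nonneg (a-b), sq_nonneg (a'-b)]
  nlinarith [mul_pos (sub_pos.2 h2) (neg_pos.2 key)]

theorem stmt8 (β τQ : ℝ) (hβ : β ∈ Set.Ioo (0 : ℝ) 1) (hτ : 0 < τQ)
    (σα c q n : ℝ → ℝ)
    (hσα : ∀ α, σα α = Real.sqrt (α ^ 2 + (1 - α) ^ 2))
    (hc : ∀ α, c α = α * β + (1 - α) * (1 - β))
    (hq : ∀ α, q α = c α / σα α * Haz (τQ * σα α / c α))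
    (hn : ∀ α, n α = 1 - Phi (τQ * σα α / c α)) :
    StrictMonoOn q (Set.Ioo 0 β) ∧ StrictAntiOn q (Set.Ioo β 1) ∧
    StrictMonoOn n (Set.Ioo 0 β) ∧ StrictAntiOn n (Set.Ioo β 1) ∧
    (∀ α ∈ Set.Ioo (0 : ℝ) 1, α ≠ β → q α < q β ∧ n α < n β) := by
  obtain ⟨hβ0, hβ1⟩ := hβ
  have hcpos : ∀ a : ℝ, 0 ≤ a → a ≤ 1 → 0 < c a := by
    intro a h0 h1
    rw [hc]
    nlinarith [mul_nonneg h0 hβ0.le, mul_nonneg (sub_nonneg.2 h1) (sub_nonneg.2 hβ1.le)]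
  have hσpos : ∀ a : ℝ, 0 < σα a := by
    intro a
    rw [hσα]
    apply Real.sqrt_pos.2
    nlinarith [sq_nonneg (2*a - 1)]
  set X : ℝ → ℝ := fun a => τQ * σα a / c a with hX
  have hXpos : ∀ a : ℝ, 0 ≤ a → a ≤ 1 → 0 < X a := fun a h0 h1 =>
    div_pos (mul_pos hτ (hσpos a)) (hcpos a h0 h1)
  have hσsq : ∀ a : ℝ, (σα a) ^ 2 = 2*a^2 - 2*a + 1 := by
    intro a
    rw [hσα, Real.sq_sqrt (by nlinarith [sq_nonneg (2*a-1)] : (0:ℝ) ≤ a ^ 2 + (1-a)^2)]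
    ring
  have hcmp : ∀ a a' : ℝ, 0 ≤ a → a ≤ 1 → 0 ≤ a' → a' ≤ 1 →
      (2*a'^2-2*a'+1)*(c a)^2 < (2*a^2-2*a+1)*(c a')^2 → X a' < X a := by
    intro a a' h0 h1 h0' h1' hpoly
    have hca := hcpos a h0 h1
    have hca' := hcpos a' h0' h1'
    have h2 : (σα a' * c a) ^ 2 < (σα a * c a') ^ 2 := by
      rw [mul_pow, mul_pow, hσsq, hσsq]
      nlinarith
    have h3 : σα a' * c a < σα a * c a' :=
      lt_of_pow_lt_pow_left₀ 2 (mul_nonneg (hσpos a).le hca'.le) h2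
    show τQ * σα a' / c a' < τQ * σα a / c a
    rw [div_lt_div_iff₀ hca' hca]
    nlinarith [hσpos a, hσpos a']
  have hqX : ∀ a : ℝ, 0 ≤ a → a ≤ 1 → q a = τQ * (Haz (X a) / X a) := by
    intro a h0 h1
    have hca := (hcpos a h0 h1).ne'
    have hsa := (hσpos a).ne'
    have hτ' := hτ.ne'
    rw [hq a]
    show c a / σα a * Haz (τQ * σα a / c a) =
      τQ * (Haz (τQ * σα a / c a) / (τQ * σα a / c a))
    rw [div_div_eq_mul_div, mul_div_assoc']
    field_simp
  have hqlt : ∀ a a' : ℝ, 0 ≤ a → a ≤ 1 → 0 ≤ a' → a' ≤ 1 → X a' < X a → q a < q a' := by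
    intro a a' h0 h1 h0' h1' hXlt
    rw [hqX a h0 h1, hqX a' h0' h1']
    exact mul_lt_mul_of_pos_left
      (strictAntiOn_haz_div (hXpos a' h0' h1') (hXpos a h0 h1) hXlt) hτ
  have hnlt : ∀ a a' : ℝ, X a' < X a → n a < n a' := by
    intro a a' hXlt
    have := strictMono_Phi hXlt
    rw [hn, hn]
    linarith
  have hR1 : ∀ a a' : ℝ, 0 < a → a < a' → a' ≤ β → X a' < X a := by
    intro a a' h0 h1 h2
    refine hcmp a a' h0.le (by linarith) (by linarith) (by linarith) ?_
    rw [hc, hc]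
    exact poly1 β a a' h0 h1 h2 hβ1
  have hR2 : ∀ a a' : ℝ, β ≤ a → a < a' → a' < 1 → X a < X a' := by
    intro a a' h0 h1 h2
    refine hcmp a' a (by linarith) h2.le (by linarith) (by linarith) ?_
    rw [hc, hc]
    exact poly2 β a a' hβ0 h0 h1 h2
  have hqm : StrictMonoOn q (Set.Ioc 0 β) := by
    intro a ha a' ha' h
    have ha1 : a ≤ 1 := by have := ha.2; linarith
    have ha'1 : a' ≤ 1 := by have := ha'.2; linarith
    exact hqlt a a' ha.1.le ha1 (ha.1.trans h).le ha'1 (hR1 a a' ha.1 h ha'.2)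
  have hqa : StrictAntiOn q (Set.Ico β 1) := by
    intro a ha a' ha' h
    have ha0 : 0 ≤ a := by have := ha.1; linarith
    have ha'0 : 0 ≤ a' := by have := ha'.1; linarith
    exact hqlt a' a ha'0 ha'.2.le ha0 (h.trans ha'.2).le (hR2 a a' ha.1 h ha'.2)
  have hnm : StrictMonoOn n (Set.Ioc 0 β) := by
    intro a ha a' ha' h
    exact hnlt a a' (hR1 a a' ha.1 h ha'.2)
  have hna : StrictAntiOn n (Set.Ico β 1) := by
    intro a ha a' ha' h
    exact hnlt a' a (hR2 a a' ha.1 h ha'.2)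
  refine ⟨hqm.mono Set.Ioo_subset_Ioc_self, hqa.mono Set.Ioo_subset_Ico_self,
    hnm.mono Set.Ioo_subset_Ioc_self, hna.mono Set.Ioo_subset_Ico_self, ?_⟩
  intro α hα hne
  rcases hne.lt_or_gt with h | h
  · have hXlt := hR1 α β hα.1 h le_rfl
    exact ⟨hqlt α β hα.1.le hα.2.le hβ0.le hβ1.le hXlt, hnlt α β hXlt⟩
  · have hXlt := hR2 β α le_rfl h hα.2
    exact ⟨hqlt α β hα.1.le hα.2.le hβ0.le hβ1.le hXlt, hnlt α β hXlt⟩
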